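/- For all x with 0 < x < π/2, the area of the circular segment cut off by the chord of the arc 2x in a unit circle exceeds 4/3 times the area of the maximum inscribed triangle; analytically: x − sin(x)·cos(x) > (4/3)·sin(x)·(1 − cos(x)). -/

import Mathlib

theorem heron_huygens_first_lemma (x : ℝ) (h0 : 0 < x) (h1 : x < Real.pi / 2) :
    x - Real.sin x * Real.cos x > (4 / 3) * Real.sin x * (1 - Real.cos x) := by
  have key : StrictMonoOn
      (fun y => y - Real.sin y * Real.cos y - (4 / 3) * Real.sin y * (1 - Real.cos y))
      (Set.Icc 0 (Real.pi / 2)) := by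
    apply strictMonoOn_of_deriv_pos (convex_Icc _ _)
    · fun_prop
    · intro y hy
      rw [interior_Icc] at hy
      have hd : HasDerivAt
          (fun y => y - Real.sin y * Real.cos y - (4 / 3) * Real.sin y * (1 - Real.cos y))
          (2 / 3 * (1 - Real.cos y) ^ 2) y := by
        have h1 := (Real.hasDerivAt_sin y).mul (Real.hasDerivAt_cos y)
        have h2 := (((Real.hasDerivAt_sin y).const_mul ((4:ℝ)/3)).mul
          ((hasDerivAt_const y (1:ℝ)).sub (Real.hasDerivAt_cos y)))
        have h3 := ((hasDerivAt_id y).sub h1).sub h2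
        refine h3.congr_deriv ?_
        simp only [Pi.sub_apply]
        have := Real.sin_sq_add_cos_sq y
        ring_nf
        nlinarith [Real.sin_sq_add_cos_sq y]
      rw [hd.deriv]
      have hs : 0 < Real.sin y := Real.sin_pos_of_pos_of_lt_pi hy.1
        (hy.2.trans (by linarith [Real.pi_pos]))
      nlinarith [Real.sin_sq_add_cos_sq y, Real.cos_le_one y, sq_nonneg (1 - Real.cos y), mul_pos hs hs]
  have h2 : (0:ℝ) ∈ Set.Icc 0 (Real.pi / 2) := by
    constructor <;> [rfl; positivity]
  have h3 : x ∈ Set.Icc 0 (Real.pi / 2) := ⟨h0.le, h1.le⟩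
  have := key h2 h3 h0
  simp at this
  linarith
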